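/- A commutative ring R with identity is locally Noetherian (i.e., R_M is Noetherian for every maximal ideal M of R) if and only if its Anderson ring R[X]_A is locally Noetherian (i.e., (R[X]_A)_m is Noetherian for every maximal ideal m of R[X]_A). -/

import Mathlib

open Polynomial

/-- The multiplicative set `A = {f ∈ R[X] : f(0) = 1}` of polynomials
with constant term `1`. -/
def andersonSubmonoid (R : Type*) [CommRing R] : Submonoid (Polynomial R) where
  carrier := {f | f.coeff 0 = 1}
  one_mem' := by simp
  mul_mem' := by
    intro a b ha hb
    simp only [Set.mem_setOf_eq, Polynomial.mul_coeff_zero] at *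
    rw [ha, hb, mul_one]

/-- The Anderson ring `R[X]_A`, the localization of `R[X]` at `A`. -/
abbrev AndersonRing (R : Type*) [CommRing R] := Localization (andersonSubmonoid R)

/-- The canonical ring homomorphism `R → R[X]_A`. -/
noncomputable def andersonMap (R : Type*) [CommRing R] : R →+* AndersonRing R :=
  (algebraMap (Polynomial R) (AndersonRing R)).comp Polynomial.C

/-- If `S = W⁻¹R`, then `S[X]` is the localization of `R[X]` at `C '' W`. -/
theorem polynomial_isLocalization {R : Type*} [CommRing R] (W : Submonoid R)
    (S : Type*) [CommRing S] [Algebra R S] [IsLocalization W S] :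
    @IsLocalization (Polynomial R) _ (W.map (C : R →+* Polynomial R)) (Polynomial S) _
      (Polynomial.mapRingHom (algebraMap R S)).toAlgebra := by
  letI : Algebra (Polynomial R) (Polynomial S) :=
    (Polynomial.mapRingHom (algebraMap R S)).toAlgebra
  have halg : ∀ p : Polynomial R,
      algebraMap (Polynomial R) (Polynomial S) p = p.map (algebraMap R S) := fun _ => rfl
  constructor
  constructor
  · rintro ⟨_, s, hs, rfl⟩
    show IsUnit (algebraMap (Polynomial R) (Polynomial S) (C s))
    rw [halg, Polynomial.map_C]
    exact (IsLocalization.map_units S ⟨s, hs⟩).map (C : S →+* Polynomial S)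
  · intro p
    obtain ⟨b, hb⟩ := IsLocalization.integerNormalization_map_to_map W p
    refine ⟨⟨IsLocalization.integerNormalization W p,
      ⟨C (b : R), Submonoid.mem_map_of_mem _ b.2⟩⟩, ?_⟩
    show p * algebraMap (Polynomial R) (Polynomial S) (C (b : R)) = _
    rw [halg, halg, Polynomial.map_C, hb, mul_comm]
    ext n
    simp [Polynomial.coeff_smul, Polynomial.coeff_C_mul, Algebra.smul_def]
  · intro p q h
    have h' : ∀ i, algebraMap R S (p.coeff i) = algebraMap R S (q.coeff i) := by
      intro i
      have := congrArg (fun f => Polynomial.coeff f i) h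
      simpa [halg, Polynomial.coeff_map] using this
    choose c hc using fun i => IsLocalization.exists_of_eq (M := W) (S := S) (h' i)
    classical
    set s : Finset ℕ := p.support ∪ q.support with hs
    refine ⟨⟨C (∏ i ∈ s, (c i : R)),
      Submonoid.mem_map_of_mem _ (Submonoid.prod_mem _ fun i _ => (c i).2)⟩, ?_⟩
    show C (∏ i ∈ s, (c i : R)) * p = C (∏ i ∈ s, (c i : R)) * q
    ext n
    simp only [Polynomial.coeff_C_mul]
    by_cases hn : n ∈ s
    · rw [← Finset.prod_erase_mul s _ hn, mul_assoc, mul_assoc, hc n]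
    · have hp : p.coeff n = 0 :=
        Polynomial.notMem_support_iff.mp fun h => hn (Finset.mem_union_left _ h)
      have hq : q.coeff n = 0 :=
        Polynomial.notMem_support_iff.mp fun h => hn (Finset.mem_union_right _ h)
      rw [hp, hq]

set_option maxHeartbeats 1000000 in
set_option synthInstance.maxHeartbeats 400000 in
/-- `R` is locally Noetherian iff its Anderson ring `R[X]_A` is locally
Noetherian. -/
theorem anderson_locallyNoetherian_iff (R : Type*) [CommRing R] :
    (∀ (M : Ideal R) (hM : M.IsMaximal),
      IsNoetherianRing (@Localization.AtPrime R _ M hM.isPrime)) ↔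
    (∀ (m : Ideal (AndersonRing R)) (hm : m.IsMaximal),
      IsNoetherianRing (@Localization.AtPrime (AndersonRing R) _ m hm.isPrime)) := by
  constructor
  · -- forward direction
    intro H m hm
    haveI := hm.isPrime
    set Q : Ideal (Polynomial R) :=
      m.comap (algebraMap (Polynomial R) (AndersonRing R)) with hQ
    haveI : Q.IsPrime := Ideal.IsPrime.comap _
    set P : Ideal R := Q.comap (C : R →+* Polynomial R) with hP
    haveI : P.IsPrime := Ideal.IsPrime.comap _
    obtain ⟨M, hM, hPM⟩ := P.exists_le_maximal (Ideal.IsPrime.ne_top ‹P.IsPrime›)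
    -- Step A : Localization.AtPrime P is Noetherian
    haveI := hM.isPrime
    have hle1 : M.primeCompl ≤ P.primeCompl := fun x hx hxP => hx (hPM hxP)
    letI : Algebra (Localization.AtPrime M) (Localization.AtPrime P) :=
      IsLocalization.localizationAlgebraOfSubmonoidLe _ _ M.primeCompl P.primeCompl hle1
    haveI : IsScalarTower R (Localization.AtPrime M) (Localization.AtPrime P) :=
      IsLocalization.localization_isScalarTower_of_submonoid_le _ _ _ _ hle1
    haveI : IsLocalization
        (P.primeCompl.map (algebraMap R (Localization.AtPrime M)))
        (Localization.AtPrime P) :=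
      IsLocalization.isLocalization_of_submonoid_le _ _ _ _ hle1
    have hNoethP : IsNoetherianRing (Localization.AtPrime P) :=
      IsLocalization.isNoetherianRing
        (P.primeCompl.map (algebraMap R (Localization.AtPrime M)))
        (Localization.AtPrime P) (H M hM)
    -- Step B : (Localization.AtPrime P)[X] is Noetherian
    haveI := hNoethP
    have hNoethPX : IsNoetherianRing (Polynomial (Localization.AtPrime P)) :=
      inferInstance
    -- Step C : Localization.AtPrime m is a localization of (Localization.AtPrime P)[X]
    letI : Algebra (Polynomial R) (Polynomial (Localization.AtPrime P)) :=
      (Polynomial.mapRingHom (algebraMap R (Localization.AtPrime P))).toAlgebra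
    haveI : IsLocalization (P.primeCompl.map (C : R →+* Polynomial R))
        (Polynomial (Localization.AtPrime P)) :=
      polynomial_isLocalization P.primeCompl (Localization.AtPrime P)
    haveI : IsLocalization Q.primeCompl (Localization.AtPrime m) :=
      IsLocalization.isLocalization_atPrime_localization_atPrime
        (M := andersonSubmonoid R) (p := m)
    have hle2 : P.primeCompl.map (C : R →+* Polynomial R) ≤ Q.primeCompl := by
      rintro _ ⟨x, hx, rfl⟩ hmem
      exact hx hmem
    letI : Algebra (Polynomial (Localization.AtPrime P)) (Localization.AtPrime m) :=
      IsLocalization.localizationAlgebraOfSubmonoidLe _ _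
        (P.primeCompl.map (C : R →+* Polynomial R)) Q.primeCompl hle2
    haveI : IsScalarTower (Polynomial R) (Polynomial (Localization.AtPrime P))
        (Localization.AtPrime m) :=
      IsLocalization.localization_isScalarTower_of_submonoid_le _ _ _ _ hle2
    haveI : IsLocalization
        (Q.primeCompl.map
          (algebraMap (Polynomial R) (Polynomial (Localization.AtPrime P))))
        (Localization.AtPrime m) :=
      IsLocalization.isLocalization_of_submonoid_le _ _ _ _ hle2
    exact IsLocalization.isNoetherianRing
      (Q.primeCompl.map
        (algebraMap (Polynomial R) (Polynomial (Localization.AtPrime P))))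
      (Localization.AtPrime m) hNoethPX
  · -- backward direction
    intro H M hM
    haveI := hM.isPrime
    set Q : Ideal (Polynomial R) :=
      M.comap (Polynomial.constantCoeff : Polynomial R →+* R) with hQ
    have hccsurj : Function.Surjective (Polynomial.constantCoeff : Polynomial R →+* R) :=
      fun r => ⟨C r, Polynomial.coeff_C_zero⟩
    haveI hQmax : Q.IsMaximal := Ideal.comap_isMaximal_of_surjective _ hccsurj
    haveI : Q.IsPrime := hQmax.isPrime
    have hdisj : Disjoint ((andersonSubmonoid R : Submonoid (Polynomial R)) : Set (Polynomial R))
        (Q : Set (Polynomial R)) := by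
      rw [Set.disjoint_left]
      intro f hf hfQ
      have h1 : (1 : R) ∈ M := by
        have : Polynomial.constantCoeff f ∈ M := hfQ
        rwa [show Polynomial.constantCoeff f = f.coeff 0 from rfl, hf] at this
      exact hM.ne_top (Ideal.eq_top_of_isUnit_mem M h1 isUnit_one)
    set m : Ideal (AndersonRing R) :=
      Q.map (algebraMap (Polynomial R) (AndersonRing R)) with hm
    haveI hmprime : m.IsPrime :=
      IsLocalization.isPrime_of_isPrime_disjoint (andersonSubmonoid R) _ Q ‹Q.IsPrime› hdisj
    have hcomap : m.comap (algebraMap (Polynomial R) (AndersonRing R)) = Q :=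
      IsLocalization.comap_map_of_isPrime_disjoint (andersonSubmonoid R) _ ‹Q.IsPrime› hdisj
    have hmmax : m.IsMaximal := by
      refine ⟨⟨hmprime.ne_top, fun b hb => ?_⟩⟩
      have hQle : Q ≤ b.comap (algebraMap (Polynomial R) (AndersonRing R)) := by
        rw [← hcomap]; exact Ideal.comap_mono hb.le
      rcases hQle.lt_or_eq with hlt | heq
      · have : b.comap (algebraMap (Polynomial R) (AndersonRing R)) = ⊤ :=
          hQmax.1.2 _ hlt
        have := congrArg (Ideal.map (algebraMap (Polynomial R) (AndersonRing R))) this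
        rwa [IsLocalization.map_comap (andersonSubmonoid R), Ideal.map_top] at this
      · exfalso
        have : m = b := by
          rw [hm, heq, IsLocalization.map_comap (andersonSubmonoid R)]
        exact hb.ne this
    have hNoethm := H m hmmax
    -- Localization.AtPrime m is the localization of R[X] at Q
    haveI : IsLocalization Q.primeCompl (Localization.AtPrime m) := by
      have h0 : IsLocalization
          (Ideal.comap (algebraMap (Polynomial R) (AndersonRing R)) m).primeCompl
          (Localization.AtPrime m) :=
        IsLocalization.isLocalization_atPrime_localization_atPrime
          (M := andersonSubmonoid R) (p := m)
      have hsub : (Ideal.comap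
          (algebraMap (Polynomial R) (AndersonRing R)) m).primeCompl = Q.primeCompl := by
        ext x
        show x ∉ _ ↔ x ∉ _
        rw [hcomap]
      rwa [hsub] at h0
    -- a surjection from Localization.AtPrime m onto Localization.AtPrime M
    have hle : Q.primeCompl ≤
        Submonoid.comap (Polynomial.constantCoeff : Polynomial R →+* R) M.primeCompl :=
      fun x hx hmem => hx hmem
    set g : Localization.AtPrime m →+* Localization.AtPrime M :=
      IsLocalization.map (S := Localization.AtPrime m) (M := Q.primeCompl)
        (T := M.primeCompl) (Localization.AtPrime M)
        (Polynomial.constantCoeff : Polynomial R →+* R) hle with hg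
    have hsurj : Function.Surjective g := by
      intro x
      obtain ⟨⟨r, s⟩, rfl⟩ := IsLocalization.mk'_surjective M.primeCompl x
      have hsQ : (C (s : R)) ∈ Q.primeCompl := by
        intro hmem
        have h1 : Polynomial.constantCoeff (C (s : R)) ∈ M := hmem
        rw [show Polynomial.constantCoeff (C (s : R)) = (s : R) from Polynomial.coeff_C_zero]
          at h1
        exact s.2 h1
      refine ⟨IsLocalization.mk' (Localization.AtPrime m) (C r)
        (⟨C (s : R), hsQ⟩ : Q.primeCompl), ?_⟩
      rw [hg, IsLocalization.map_mk']
      congr 1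
      · exact Polynomial.coeff_C_zero
      · ext
        exact Polynomial.coeff_C_zero
    exact isNoetherianRing_of_surjective _ _ g hsurj
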